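/- Let n ≥ 3 and let u be a word in variables x_1,...,x_n such that: (a) for each 1 ≤ i ≤ n−1, the projection u[x_i,x_{i+1}] equals x_i x_{i+1} x_i x_{i+1}, and (b) for each 1 ≤ i ≤ n−2, the projection u[x_i,x_{i+2}] is not equal to x_i x_{i+2} x_i x_{i+2}. Then u equals the chain word C_n. -/
import Mathlib


/-- The chain words: `C 0 = 1`, `C 1 = x₁²`, and if `C k = c · xₖ` then
`C (k+1) = c · x_{k+1} · xₖ · x_{k+1}`. Variables are the positive naturals. -/
def chainW : ℕ → List ℕ
  | 0 => []
  | 1 => [1, 1]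
  | (k+2) => (chainW (k+1)).dropLast ++ [k+2, k+1, k+2]

/-- Projection of a word to the two variables `i`, `j` (deleting all other letters). -/
def proj2 (u : List ℕ) (i j : ℕ) : List ℕ := u.filter (fun a => a == i || a == j)


lemma proj2_append (u v : List ℕ) (i j : ℕ) :
    proj2 (u ++ v) i j = proj2 u i j ++ proj2 v i j := List.filter_append ..

lemma proj2_nil (i j : ℕ) : proj2 [] i j = [] := rfl

lemma proj2_cons (a : ℕ) (u : List ℕ) (i j : ℕ) :
    proj2 (a :: u) i j = if a = i ∨ a = j then a :: proj2 u i j else proj2 u i j := by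
  simp only [proj2, List.filter_cons]
  by_cases h : a = i ∨ a = j <;> simp [h]

lemma proj2_no_j (l : List ℕ) (i j : ℕ) (hj : j ∉ l) :
    proj2 l i j = List.replicate (l.count i) i := by
  induction l with
  | nil => simp [proj2]
  | cons a t ih =>
    simp only [List.mem_cons, not_or] at hj
    rw [proj2_cons]
    by_cases hai : a = i
    · subst hai; simp [List.count_cons, ih hj.2, List.replicate_succ]
    · have : ¬ (a = i ∨ a = j) := by rintro (h|h); exact hai h; exact hj.1 h.symm
      rw [if_neg this]; simp [List.count_cons, hai, ih hj.2]

lemma count_eq_one_split {l : List ℕ} {a : ℕ} (h : l.count a = 1) :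
    ∃ B C, l = B ++ a :: C ∧ a ∉ B ∧ a ∉ C := by
  induction l with
  | nil => simp at h
  | cons b t ih =>
    by_cases hb : b = a
    · subst hb
      have : t.count b = 0 := by simpa [List.count_cons] using h
      exact ⟨[], t, by simp, by simp, List.count_eq_zero.mp this⟩
    · have : t.count a = 1 := by simpa [List.count_cons, hb] using h
      obtain ⟨B, C, rfl, hB, hC⟩ := ih this
      exact ⟨b :: B, C, by simp, by simp [Ne.symm hb, hB], hC⟩

lemma count_eq_two_split {l : List ℕ} {a : ℕ} (h : l.count a = 2) :
    ∃ A B C, l = A ++ a :: B ++ a :: C ∧ a ∉ A ∧ a ∉ B ∧ a ∉ C := by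
  induction l with
  | nil => simp at h
  | cons b t ih =>
    by_cases hb : b = a
    · subst hb
      have : t.count b = 1 := by simpa [List.count_cons] using h
      obtain ⟨B, C, rfl, hB, hC⟩ := count_eq_one_split this
      exact ⟨[], B, C, by simp, by simp, hB, hC⟩
    · have : t.count a = 2 := by simpa [List.count_cons, hb] using h
      obtain ⟨A, B, C, rfl, hA, hB, hC⟩ := ih this
      exact ⟨b :: A, B, C, by simp, by simp [Ne.symm hb, hA], hB, hC⟩

lemma chainW_succ (k : ℕ) : chainW (k+2) = (chainW (k+1)).dropLast ++ [k+2, k+1, k+2] := rfl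

lemma chainW_mem : ∀ m, ∀ a ∈ chainW m, 1 ≤ a ∧ a ≤ m
  | 0 => by simp [chainW]
  | 1 => by intro a ha; simp [chainW] at ha; omega
  | (k+2) => by
    intro a ha
    rw [chainW_succ] at ha
    rcases List.mem_append.mp ha with h | h
    · have := chainW_mem (k+1) a ((List.dropLast_sublist _).subset h)
      omega
    · simp at h; omega

lemma chainW_eq_dropLast : ∀ m, 1 ≤ m → chainW m = (chainW m).dropLast ++ [m]
  | 1, _ => rfl
  | (k+2), _ => by
    rw [chainW_succ]
    have : (chainW (k+1)).dropLast ++ [k+2,k+1,k+2]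
        = ((chainW (k+1)).dropLast ++ [k+2,k+1]) ++ [k+2] := by simp
    rw [this, List.dropLast_concat]

lemma chainW_count_gt (m a : ℕ) (h : m < a) : (chainW m).count a = 0 := by
  rw [List.count_eq_zero]; intro hmem; have := chainW_mem m _ hmem; omega

lemma chainW_count_self (m : ℕ) (hm : 1 ≤ m) : (chainW m).count m = 2 := by
  match m, hm with
  | 1, _ => rfl
  | (k+2), _ =>
    rw [chainW_succ, List.count_append]
    have h0 : (chainW (k+1)).dropLast.count (k+2) = 0 := by
      rw [List.count_eq_zero]
      intro h
      have := chainW_mem (k+1) _ ((List.dropLast_sublist _).subset h)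
      omega
    rw [h0]
    simp [List.count_cons]

lemma chainW_dropLast_count (m : ℕ) (hm : 1 ≤ m) : ((chainW m).dropLast).count m = 1 := by
  have h2 := chainW_count_self m hm
  rw [chainW_eq_dropLast m hm, List.count_append] at h2
  simp at h2
  omega

lemma replicate_pattern {x y : ℕ} (hxy : x ≠ y) {p q r : ℕ}
    (h : List.replicate p x ++ y :: (List.replicate q x ++ y :: List.replicate r x)
      = [x, y, x, y]) : p = 1 ∧ q = 1 ∧ r = 0 := by
  have hl := congrArg List.length h
  simp at hl
  have hp : p ≤ 2 := by omega
  have hq : q ≤ 2 := by omega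
  have hr : r ≤ 2 := by omega
  interval_cases p <;> interval_cases q <;> interval_cases r <;>
    simp [List.replicate_succ] at h ⊢ <;> omega

lemma aux_chain : ∀ n, 2 ≤ n → ∀ u : List ℕ,
    (∀ a ∈ u, 1 ≤ a ∧ a ≤ n) →
    (∀ i : ℕ, 1 ≤ i → i ≤ n → u.count i = 2) →
    (∀ i : ℕ, 1 ≤ i → i + 1 ≤ n → proj2 u i (i+1) = [i, i+1, i, i+1]) →
    (∀ i : ℕ, 1 ≤ i → i + 2 ≤ n → proj2 u i (i+2) ≠ [i, i+2, i, i+2]) →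
    u = chainW n := by
  intro n
  induction n using Nat.strong_induction_on with
  | _ n IH =>
  intro hn u hvars hocc ha hb
  rcases eq_or_lt_of_le hn with h2 | h3
  · -- base case n = 2
    subst h2
    have hu : proj2 u 1 2 = u := List.filter_eq_self.mpr (by
      intro a hau
      have := hvars a hau
      have : a = 1 ∨ a = 2 := by omega
      rcases this with rfl | rfl <;> simp)
    have h12 := ha 1 (by omega) (by omega)
    rw [hu] at h12
    rw [h12]
    decide
  · obtain ⟨m, rfl⟩ : ∃ m, n = m + 3 := ⟨n - 3, by omega⟩
    have hcN : u.count (m+3) = 2 := hocc (m+3) (by omega) le_rfl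
    obtain ⟨A, B, C, rfl, hA, hB, hC⟩ := count_eq_two_split hcN
    have hproj : ∀ i, i < m+3 → proj2 (A ++ (m+3) :: B ++ (m+3) :: C) i (m+3)
        = List.replicate (A.count i) i ++ (m+3) ::
          (List.replicate (B.count i) i ++ (m+3) :: List.replicate (C.count i) i) := by
      intro i hi
      simp [proj2_append, proj2_cons, proj2_no_j A i _ hA, proj2_no_j B i _ hB,
        proj2_no_j C i _ hC]
    have hcnt : ∀ i, i ≠ m+3 →
        (A ++ (m+3) :: B ++ (m+3) :: C).count i = A.count i + B.count i + C.count i := by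
      intro i hi
      have hnot : ¬ (m+3 = i) := fun h => hi h.symm
      simp only [List.count_append, List.count_cons]
      simp [hi, hnot]
    have key : ∀ i j, i < m+3 → j < m+3 →
        proj2 (A ++ (m+3) :: B ++ (m+3) :: C) i j = proj2 (A ++ B ++ C) i j := by
      intro i j hi hj
      have hne : ¬((m+3) = i ∨ (m+3) = j) := by omega
      simp [proj2_append, proj2_cons, hne, List.append_assoc]
    have h1 := ha (m+2) (by omega) (by omega)
    rw [hproj (m+2) (by omega)] at h1
    obtain ⟨pA, pB, pC⟩ := replicate_pattern (by omega) h1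
    have hv : A ++ B ++ C = chainW (m+2) := by
      apply IH (m+2) (by omega) (by omega)
      · intro a hav
        have ham : a ∈ A ++ (m+3) :: B ++ (m+3) :: C := by
          simp at hav ⊢; tauto
        have h5 := hvars a ham
        have h6 : a ≠ m+3 := by
          rintro rfl; simp at hav
          rcases hav with h | h | h
          exacts [hA h, hB h, hC h]
        exact ⟨h5.1, by omega⟩
      · intro i h1i hi
        have h7 : i ≠ m+3 := by omega
        have h8 := hocc i h1i (by omega)
        rw [hcnt i h7] at h8
        simp only [List.count_append]
        omega
      · intro i h1i hi
        rw [← key i (i+1) (by omega) (by omega)]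
        exact ha i h1i (by omega)
      · intro i h1i hi hcontra
        exact hb i h1i (by omega) ((key i (i+2) (by omega) (by omega)).trans hcontra)
    -- C = []
    have hC0 : (m+2) ∉ C := List.count_eq_zero.mp pC
    obtain rfl | ⟨C', c, rfl⟩ := C.eq_nil_or_concat
    swap
    · exfalso
      rw [chainW_eq_dropLast (m+2) (by omega)] at hv
      have h9 := congrArg List.getLast? hv
      simp [List.getLast?_append, List.getLast?_concat] at h9
      exact hC0 (by simp [h9])
    simp only [List.append_nil] at hv
    rw [chainW_succ m] at hv
    have hPcount2 : ((chainW (m+1)).dropLast).count (m+2) = 0 := by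
      rw [List.count_eq_zero]
      intro hmem
      have := chainW_mem (m+1) _ ((List.dropLast_sublist _).subset hmem)
      omega
    have hPcount1 : ((chainW (m+1)).dropLast).count (m+1) = 1 :=
      chainW_dropLast_count (m+1) (by omega)
    rcases List.append_eq_append_iff.mp hv with ⟨a', ha1, ha2⟩ | ⟨c', hc1, hc2⟩
    · exfalso
      have : B.count (m+2) = a'.count (m+2) + 2 := by
        rw [ha2]
        simp [List.count_append, List.count_cons]
      omega
    · have hcA : c'.count (m+2) = 1 := by
        have : A.count (m+2) = ((chainW (m+1)).dropLast).count (m+2) + c'.count (m+2) := by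
          rw [hc1, List.count_append]
        omega
      rcases c' with _ | ⟨y1, c'⟩
      · simp at hcA
      rcases c' with _ | ⟨y2, c'⟩
      · -- c' = [y1] : the forbidden middle insertion
        simp only [List.cons_append, List.nil_append, List.cons.injEq] at hc2
        obtain ⟨h10, h12⟩ := hc2
        subst h10
        have hBval : B = [m+1, m+2] := h12.symm
        exfalso
        apply hb (m+1) (by omega) (by omega)
        rw [hproj (m+1) (by omega)]
        have hA1 : A.count (m+1) = 1 := by
          rw [hc1, List.count_append]
          simp [List.count_cons, hPcount1]
        have hB1 : B.count (m+1) = 1 := by simp [hBval, List.count_cons]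
        rw [hA1, hB1]
        simp
      rcases c' with _ | ⟨y3, c'⟩
      · -- c' = [y1, y2] : the good case
        simp only [List.cons_append, List.nil_append, List.cons.injEq] at hc2
        obtain ⟨h10, h11, h12⟩ := hc2
        subst h10; subst h11
        have hBval : B = [m+2] := h12.symm
        rw [hBval, hc1]
        rw [show m+3 = (m+1)+2 from rfl, chainW_succ (m+1)]
        have hdl : (chainW (m+2)).dropLast = (chainW (m+1)).dropLast ++ [m+2, m+1] := by
          rw [chainW_succ m]
          rw [show (chainW (m+1)).dropLast ++ [m+2,m+1,m+2]
              = ((chainW (m+1)).dropLast ++ [m+2,m+1]) ++ [m+2] by simp,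
            List.dropLast_concat]
        rw [hdl]
        simp
      · exfalso
        have hlen := congrArg List.length hc2
        simp [List.length_append] at hlen
        obtain ⟨rfl, rfl⟩ := hlen
        simp at pB

/-- Let `n ≥ 3` and let `u` be a word in variables `x₁,…,xₙ` in which every variable
occurs exactly twice, such that `u[xᵢ,x_{i+1}] = xᵢ x_{i+1} xᵢ x_{i+1}` for all
`1 ≤ i ≤ n-1` and `u[xᵢ,x_{i+2}] ≠ xᵢ x_{i+2} xᵢ x_{i+2}` for all `1 ≤ i ≤ n-2`.
Then `u` is the chain word `C n`. -/
theorem chain_unique (n : ℕ) (hn : 3 ≤ n) (u : List ℕ)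
    (hvars : ∀ a ∈ u, 1 ≤ a ∧ a ≤ n)
    (hocc : ∀ i : ℕ, 1 ≤ i → i ≤ n → u.count i = 2)
    (ha : ∀ i : ℕ, 1 ≤ i → i + 1 ≤ n → proj2 u i (i+1) = [i, i+1, i, i+1])
    (hb : ∀ i : ℕ, 1 ≤ i → i + 2 ≤ n → proj2 u i (i+2) ≠ [i, i+2, i, i+2]) :
    u = chainW n :=
  aux_chain n (by omega) u hvars hocc ha hb
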